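/- Let R ⊆ R' be a finite extension of integral domains (R' is a domain, module-finite over R), M a finitely generated R-module, and X, Y closed subsets of 𝔸_M. Then X = Y if and only if the base changes X_{R'} and Y_{R'} are equal as closed subsets of 𝔸_{R'⊗M}. -/

import Mathlib

open scoped TensorProduct

universe u

/-- A polynomial law `M → N` over `R`: a family of maps `A ⊗[R] M → A ⊗[R] N`, one for every
commutative `R`-algebra `A`, commuting with base change along all `R`-algebra homomorphisms. -/
structure PolyLaw (R : Type u) [CommRing R] (M N : Type u)
    [AddCommGroup M] [Module R M] [AddCommGroup N] [Module R N] : Type (u + 1) where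
  toFun : ∀ (A : Type u) [CommRing A] [Algebra R A], A ⊗[R] M → A ⊗[R] N
  isCompat : ∀ {A B : Type u} [CommRing A] [Algebra R A] [CommRing B] [Algebra R B]
      (φ : A →ₐ[R] B) (x : A ⊗[R] M),
      LinearMap.rTensor N φ.toLinearMap (toFun A x) = toFun B (LinearMap.rTensor M φ.toLinearMap x)

namespace PolyLaw

variable {R : Type u} [CommRing R] {M N P : Type u}
  [AddCommGroup M] [Module R M] [AddCommGroup N] [Module R N] [AddCommGroup P] [Module R P]

theorem ext' {f g : PolyLaw R M N}
    (h : ∀ (A : Type u) [CommRing A] [Algebra R A] (x : A ⊗[R] M), f.toFun A x = g.toFun A x) :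
    f = g := by
  cases f; cases g
  simp only [mk.injEq]
  funext A instA instB x
  exact h A x

/-- A polynomial law is homogeneous of degree `d` if `φ_A (a • m) = a ^ d • φ_A m` always. -/
def IsHomogeneous (f : PolyLaw R M N) (d : ℕ) : Prop :=
  ∀ (A : Type u) [CommRing A] [Algebra R A] (a : A) (x : A ⊗[R] M),
    f.toFun A (a • x) = a ^ d • f.toFun A x

/-- The polynomial law induced by a linear map. -/
noncomputable def ofLinear (ψ : M →ₗ[R] N) : PolyLaw R M N where
  toFun A _ _ := LinearMap.lTensor A ψ
  isCompat φ x := by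
    show LinearMap.rTensor N φ.toLinearMap (LinearMap.lTensor _ ψ x)
      = LinearMap.lTensor _ ψ (LinearMap.rTensor M φ.toLinearMap x)
    rw [← LinearMap.comp_apply, ← LinearMap.comp_apply,
      LinearMap.rTensor_comp_lTensor, LinearMap.lTensor_comp_rTensor]

/-- Composition of polynomial laws. -/
def comp (g : PolyLaw R N P) (f : PolyLaw R M N) : PolyLaw R M P where
  toFun A _ _ x := g.toFun A (f.toFun A x)
  isCompat φ x := by rw [g.isCompat φ, f.isCompat φ]

/-- Translation by an element `u : N`, as a polynomial law `N → N`. -/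
noncomputable def translation (u : N) : PolyLaw R N N where
  toFun A _ _ x := x + (1 : A) ⊗ₜ[R] u
  isCompat φ x := by
    simp [map_add, LinearMap.rTensor_tmul, map_one]

end PolyLaw

namespace PolyLaw

variable {R : Type u} [CommRing R] {M N : Type u}
  [AddCommGroup M] [Module R M] [AddCommGroup N] [Module R N]

noncomputable instance : Zero (PolyLaw R M N) :=
  ⟨{ toFun := fun A _ _ _ => 0, isCompat := fun φ x => by simp }⟩

noncomputable instance : Add (PolyLaw R M N) :=
  ⟨fun f g =>
    { toFun := fun A _ _ x => f.toFun A x + g.toFun A x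
      isCompat := fun φ x => by simp [map_add, f.isCompat, g.isCompat] }⟩

noncomputable instance : Neg (PolyLaw R M N) :=
  ⟨fun f =>
    { toFun := fun A _ _ x => - f.toFun A x
      isCompat := fun φ x => by simp [map_neg, f.isCompat] }⟩

noncomputable instance : SMul R (PolyLaw R M N) :=
  ⟨fun r f =>
    { toFun := fun A _ _ x => r • f.toFun A x
      isCompat := fun φ x => by simp [map_smul, f.isCompat] }⟩

@[simp] lemma zero_toFun (A : Type u) [CommRing A] [Algebra R A] (x : A ⊗[R] M) :
    (0 : PolyLaw R M N).toFun A x = 0 := rfl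

@[simp] lemma add_toFun (f g : PolyLaw R M N) (A : Type u) [CommRing A] [Algebra R A]
    (x : A ⊗[R] M) : (f + g).toFun A x = f.toFun A x + g.toFun A x := rfl

@[simp] lemma neg_toFun (f : PolyLaw R M N) (A : Type u) [CommRing A] [Algebra R A]
    (x : A ⊗[R] M) : (-f).toFun A x = - f.toFun A x := rfl

@[simp] lemma smul_toFun (r : R) (f : PolyLaw R M N) (A : Type u) [CommRing A] [Algebra R A]
    (x : A ⊗[R] M) : (r • f).toFun A x = r • f.toFun A x := rfl

noncomputable instance : AddCommGroup (PolyLaw R M N) where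
  add_assoc a b c := ext' (by intros; simp [add_assoc])
  zero_add a := ext' (by intros; simp)
  add_zero a := ext' (by intros; simp)
  add_comm a b := ext' (by intros; simp [add_comm])
  neg_add_cancel a := ext' (by intros; simp)
  nsmul := nsmulRec
  zsmul := zsmulRec

noncomputable instance : Module R (PolyLaw R M N) where
  one_smul f := ext' (by intros; simp)
  mul_smul r s f := ext' (by intros; simp [mul_smul])
  smul_zero r := ext' (by intros; simp)
  smul_add r f g := ext' (by intros; simp)
  add_smul r s f := ext' (by intros; simp [add_smul])
  zero_smul f := ext' (by intros; simp)

lemma rTensor_eq_algMap {A B : Type u} [CommRing A] [Algebra R A] [CommRing B] [Algebra R B]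
    (φ : A →ₐ[R] B) (x : A ⊗[R] R) :
    LinearMap.rTensor R φ.toLinearMap x = Algebra.TensorProduct.map φ (AlgHom.id R R) x := by
  induction x using TensorProduct.induction_on with
  | zero => simp
  | tmul a r => simp
  | add x y hx hy => simp [map_add, hx, hy]

noncomputable instance : One (PolyLaw R M R) :=
  ⟨{ toFun := fun A _ _ _ => 1
     isCompat := fun φ x => by rw [rTensor_eq_algMap, map_one] }⟩

noncomputable instance : Mul (PolyLaw R M R) :=
  ⟨fun f g =>
    { toFun := fun A _ _ x => f.toFun A x * g.toFun A x
      isCompat := fun φ x => by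
        rw [rTensor_eq_algMap, map_mul, ← rTensor_eq_algMap, ← rTensor_eq_algMap,
          f.isCompat, g.isCompat] }⟩

@[simp] lemma one_toFun (A : Type u) [CommRing A] [Algebra R A] (x : A ⊗[R] M) :
    (1 : PolyLaw R M R).toFun A x = 1 := rfl

@[simp] lemma mul_toFun (f g : PolyLaw R M R) (A : Type u) [CommRing A] [Algebra R A]
    (x : A ⊗[R] M) : (f * g).toFun A x = f.toFun A x * g.toFun A x := rfl

noncomputable instance : CommRing (PolyLaw R M R) :=
  { (inferInstance : AddCommGroup (PolyLaw R M R)) with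
    mul := (· * ·)
    one := 1
    mul_assoc := fun a b c => ext' (by intros; simp [mul_assoc])
    one_mul := fun a => ext' (by intros; simp)
    mul_one := fun a => ext' (by intros; simp)
    left_distrib := fun a b c => ext' (by intros; simp [mul_add])
    right_distrib := fun a b c => ext' (by intros; simp [add_mul])
    mul_comm := fun a b => ext' (by intros; simp [mul_comm])
    zero_mul := fun a => ext' (by intros; simp)
    mul_zero := fun a => ext' (by intros; simp) }

noncomputable instance : Algebra R (PolyLaw R M R) :=
  Algebra.ofModule (fun r x y => ext' (by intros; simp [smul_mul_assoc]))
    (fun r x y => ext' (by intros; simp [mul_smul_comm]))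

end PolyLaw

open PolyLaw

section

variable (R : Type u) [CommRing R] (M : Type u) [AddCommGroup M] [Module R M]

/-- A rule assigning to every `R`-domain `D` a subset of `D ⊗ M`. -/
def AffRule : Type (u + 1) :=
  ∀ (D : Type u) [CommRing D] [IsDomain D] [Algebra R D], Set (D ⊗[R] M)

/-- The closed subset of `𝔸_M` cut out by a set `S` of polynomial laws `M → R`. -/
def vSet (S : Set (PolyLaw R M R)) : AffRule R M :=
  fun D _ _ _ => {m | ∀ f ∈ S, f.toFun D m = 0}

section Aux

universe v
variable {R : Type v} [CommRing R] {M : Type v} [AddCommGroup M] [Module R M]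

lemma rTensorR_injective {D D' : Type v} [CommRing D] [Algebra R D]
    [CommRing D'] [Algebra R D'] (φ : D →ₐ[R] D') (hφ : Function.Injective φ) :
    Function.Injective ((LinearMap.rTensor R φ.toLinearMap : D ⊗[R] R →ₗ[R] D' ⊗[R] R)) := by
  have key : ∀ x : D ⊗[R] R, LinearMap.rTensor R φ.toLinearMap x
      = (TensorProduct.rid R D').symm (φ (TensorProduct.rid R D x)) := by
    intro x
    induction x using TensorProduct.induction_on with
    | zero => simp
    | tmul d r =>
        simp only [LinearMap.rTensor_tmul, AlgHom.toLinearMap_apply, TensorProduct.rid_tmul,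
          map_smul, LinearEquiv.symm_apply_eq, TensorProduct.rid_tmul, TensorProduct.rid_symm_apply,
          TensorProduct.smul_tmul']
        rw [TensorProduct.smul_tmul]
        simp
    | add x y hx hy => simp [map_add, hx, hy]
  intro a b hab
  rw [key, key] at hab
  have := hφ ((TensorProduct.rid R D').symm.injective hab)
  exact (TensorProduct.rid R D).injective this

lemma vSet_mem_transfer (S : Set (PolyLaw R M R)) {D D' : Type v} [CommRing D] [Algebra R D]
    [CommRing D'] [Algebra R D'] (φ : D →ₐ[R] D') (hφ : Function.Injective φ)
    (m : D ⊗[R] M) :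
    (∀ f ∈ S, f.toFun D m = 0) ↔
      (∀ f ∈ S, f.toFun D' (LinearMap.rTensor M φ.toLinearMap m) = 0) := by
  have inj := rTensorR_injective φ hφ
  constructor
  · intro h f hf
    rw [← f.isCompat φ m, h f hf, map_zero]
  · intro h f hf
    apply inj
    rw [f.isCompat φ m, h f hf, map_zero]

end Aux

/-- Let `R ⊆ R'` be a finite extension of domains, `M` a finitely generated `R`-module and
`X, Y` closed subsets of `𝔸_M`.  Then `X = Y` iff the base changes `X_{R'}` and `Y_{R'}` agree,
i.e. iff `X(D) = Y(D)` for every `R'`-domain `D`. -/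
theorem finite_extension_determines [IsDomain R] [Module.Finite R M]
    (R' : Type u) [CommRing R'] [IsDomain R'] [Algebra R R']
    (hinj : Function.Injective (algebraMap R R')) [Module.Finite R R']
    (X Y : AffRule R M) (hX : ∃ S, X = vSet R M S) (hY : ∃ T, Y = vSet R M T) :
    X = Y ↔
      ∀ (D : Type u) [CommRing D] [IsDomain D] [Algebra R' D],
        letI : Algebra R D := ((algebraMap R' D).comp (algebraMap R R')).toAlgebra
        X D = Y D := by
  constructor
  · intro hXY D _ _ _
    rw [hXY]
  · intro h
    obtain ⟨S, rfl⟩ := hX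
    obtain ⟨T, rfl⟩ := hY
    funext D cD dD aD
    ext m
    haveI : Algebra.IsIntegral R R' := Algebra.IsIntegral.of_finite R R'
    set p := RingHom.ker (algebraMap R D) with hpdef
    haveI hpP : p.IsPrime := RingHom.ker_isPrime _
    obtain ⟨q, -, hqP, hq⟩ := Ideal.exists_ideal_over_prime_of_isIntegral p ⊥
      (fun x hx => by
        have hx0 : algebraMap R R' x = 0 := by simpa using (Ideal.mem_comap.mp hx)
        have hx1 : x = 0 := hinj (by rw [hx0, map_zero])
        simp [hx1])
    haveI : q.IsPrime := hqP
    -- the quotient domains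
    let g : R ⧸ p →+* R' ⧸ q := Ideal.quotientMap q (algebraMap R R') (le_of_eq hq.symm)
    have ginj : Function.Injective g := Ideal.quotientMap_injective' (le_of_eq hq)
    letI : Algebra (R ⧸ p) (R' ⧸ q) := g.toAlgebra
    haveI : IsScalarTower R (R ⧸ p) (R' ⧸ q) :=
      IsScalarTower.of_algebraMap_eq fun r =>
        (Ideal.quotientMap_mk (J := p) (I := q) (f := algebraMap R R')
          (H := le_of_eq hq.symm) (x := r)).symm
    haveI : Module.Finite R (R' ⧸ q) :=
      Module.Finite.of_surjective (Ideal.Quotient.mkₐ R q).toLinearMap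
        (Ideal.Quotient.mkₐ_surjective R q)
    haveI : Module.Finite (R ⧸ p) (R' ⧸ q) :=
      Module.Finite.of_restrictScalars_finite R (R ⧸ p) (R' ⧸ q)
    haveI : Algebra.IsIntegral (R ⧸ p) (R' ⧸ q) := Algebra.IsIntegral.of_finite _ _
    -- the algebraically closed field
    let L := AlgebraicClosure (FractionRing D)
    let i : D →+* L :=
      (algebraMap (FractionRing D) L).comp (algebraMap D (FractionRing D))
    have iinj : Function.Injective i :=
      (algebraMap (FractionRing D) L).injective.comp (IsFractionRing.injective D (FractionRing D))
    let j : (R ⧸ p) →+* D := RingHom.kerLift (algebraMap R D)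
    have jinj : Function.Injective j := RingHom.kerLift_injective _
    letI : Algebra (R ⧸ p) L := (i.comp j).toAlgebra
    haveI : Module.IsTorsionFree (R ⧸ p) (R' ⧸ q) :=
      Module.isTorsionFree_iff_algebraMap_injective.mpr ginj
    haveI : Module.IsTorsionFree (R ⧸ p) L :=
      Module.isTorsionFree_iff_algebraMap_injective.mpr (iinj.comp jinj)
    let φ : (R' ⧸ q) →ₐ[R ⧸ p] L := IsAlgClosed.lift
    letI : Algebra R' L := (φ.toRingHom.comp (Ideal.Quotient.mk q)).toAlgebra
    letI aRL : Algebra R L := ((algebraMap R' L).comp (algebraMap R R')).toAlgebra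
    have hcomp : ∀ r : R, (algebraMap R' L) ((algebraMap R R') r) = i ((algebraMap R D) r) := by
      intro r
      show φ (Ideal.Quotient.mk q (algebraMap R R' r)) = i (algebraMap R D r)
      have h1 : Ideal.Quotient.mk q (algebraMap R R' r) = g (Ideal.Quotient.mk p r) :=
        (Ideal.quotientMap_mk).symm
      rw [h1]
      have h2 : φ (g (Ideal.Quotient.mk p r)) = i (j (Ideal.Quotient.mk p r)) :=
        φ.commutes (Ideal.Quotient.mk p r)
      rw [h2, RingHom.kerLift_mk]
    let ψ : D →ₐ[R] L := { toRingHom := i, commutes' := fun r => (hcomp r).symm }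
    have hSL : vSet R M S L = vSet R M T L := h L
    exact (vSet_mem_transfer S ψ iinj m).trans
      ((Set.ext_iff.mp hSL _).trans (vSet_mem_transfer T ψ iinj m).symm)

end
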